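/- Let n ≥ 1 and 0 ≤ s ≤ n. The cofactor A_{n,s} of the entry in position (n,s) of the Hankel matrix H_n = (s_{i+j})_{0 ≤ i,j ≤ n}, i.e. A_{n,s} = (−1)^{n+s} times the determinant of the n×n matrix obtained from H_n by deleting the row with index n and the column with index s, satisfies A_{n,s} = ((−1)^{n−s}/((q;q)_n·(p;q)_s)) · [n choose s]_q · D_n · q^{(n+1)(2n+1)/2} · q^{s²+s/2}, where D_n = det(H_n). -/
import Mathlib


/-- Finite q-shifted factorial `(z;q)_n`. -/
noncomputable def qp (z q : ℝ) (n : ℕ) : ℝ := ∏ k ∈ Finset.range n, (1 - z * q ^ k)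

/-- Gaussian q-binomial coefficient. -/
noncomputable def qbinom (q : ℝ) (n k : ℕ) : ℝ := qp q q n / (qp q q k * qp q q (n - k))

/-- Generalized Stieltjes–Wigert moments `s_n = (p;q)_n q^{-(n+1)²/2}`. -/
noncomputable def sw (p q : ℝ) (n : ℕ) : ℝ := qp p q n * q ^ (-(((n : ℝ) + 1) ^ 2) / 2)

/-- Hankel determinant `D_n = det (s_{i+j})_{0 ≤ i,j ≤ n}`. -/
noncomputable def hD (p q : ℝ) (n : ℕ) : ℝ :=
  (Matrix.of fun i j : Fin (n + 1) => sw p q ((i : ℕ) + (j : ℕ))).det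



lemma qp_zero (z q : ℝ) : qp z q 0 = 1 := Finset.prod_range_zero _

lemma qp_succ (z q : ℝ) (k : ℕ) : qp z q (k + 1) = qp z q k * (1 - z * q ^ k) :=
  Finset.prod_range_succ _ _

lemma qp_add (z q : ℝ) (s i : ℕ) :
    qp z q (s + i) = qp z q s * ∏ k ∈ Finset.range i, (1 - z * q ^ (s + k)) := by
  unfold qp
  rw [Finset.prod_range_add]

lemma qp_pos {q : ℝ} (hq0 : 0 < q) (hq1 : q < 1) {z : ℝ} (hz0 : 0 ≤ z) (hz1 : z < 1) (k : ℕ) :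
    0 < qp z q k := by
  unfold qp
  apply Finset.prod_pos
  intro j _
  have h1 : q ^ j ≤ 1 := pow_le_one₀ hq0.le hq1.le
  have h2 : 0 ≤ q ^ j := pow_nonneg hq0.le j
  nlinarith

lemma qpq_ne {q : ℝ} (hq0 : 0 < q) (hq1 : q < 1) (k : ℕ) : qp q q k ≠ 0 :=
  (qp_pos hq0 hq1 hq0.le hq1 k).ne'

lemma qbinom_zero {q : ℝ} (hq0 : 0 < q) (hq1 : q < 1) (m : ℕ) : qbinom q m 0 = 1 := by
  unfold qbinom
  rw [Nat.sub_zero, qp_zero, one_mul, div_self (qpq_ne hq0 hq1 m)]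

lemma qbinom_self {q : ℝ} (hq0 : 0 < q) (hq1 : q < 1) (m : ℕ) : qbinom q m m = 1 := by
  unfold qbinom
  rw [Nat.sub_self, qp_zero, mul_one, div_self (qpq_ne hq0 hq1 m)]

lemma pascal {q : ℝ} (hq0 : 0 < q) (hq1 : q < 1) {m s : ℕ} (h : s < m) :
    qbinom q (m + 1) (s + 1) = qbinom q m (s + 1) + q ^ (m - s) * qbinom q m s := by
  have h1 : m + 1 - (s + 1) = m - s := by omega
  have h2 : m - (s + 1) = m - s - 1 := by omega
  have h3 : m - s - 1 + 1 = m - s := by omega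
  unfold qbinom
  rw [h1, h2]
  have e1 : qp q q (m + 1) = qp q q m * (1 - q * q ^ m) := qp_succ q q m
  have e2 : qp q q (m - s) = qp q q (m - s - 1) * (1 - q * q ^ (m - s - 1)) := by
    rw [← qp_succ, h3]
  have e3 : qp q q (s + 1) = qp q q s * (1 - q * q ^ s) := qp_succ q q s
  have key : 1 - q * q ^ m = (1 - q * q ^ (m - s - 1)) + q ^ (m - s) * (1 - q * q ^ s) := by
    have t1 : q ^ (m - s) * (q * q ^ s) = q * q ^ m := by
      rw [show q * q ^ s = q ^ (s + 1) from (pow_succ' q s).symm, ← pow_add,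
        show m - s + (s + 1) = m + 1 from by omega, pow_succ']
    have t2 : q * q ^ (m - s - 1) = q ^ (m - s) := by
      rw [← pow_succ', h3]
    rw [mul_sub, t1, ← t2]
    ring
  have nzs := qpq_ne hq0 hq1 s
  have nzs1 := qpq_ne hq0 hq1 (s + 1)
  have nzms := qpq_ne hq0 hq1 (m - s)
  have nzms1 := qpq_ne hq0 hq1 (m - s - 1)
  rw [e1, key]
  field_simp
  rw [e2, e3]
  ring

lemma choose_two_cast (s : ℕ) : ((s.choose 2 : ℕ) : ℝ) = s * (s - 1) / 2 := by
  induction s with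
  | zero => simp
  | succ k ih =>
    have : (k + 1).choose 2 = k.choose 2 + k := by
      rw [Nat.choose_succ_succ, Nat.choose_one_right, Nat.add_comm]
    rw [this]
    push_cast [ih]
    ring

lemma qbt {q : ℝ} (hq0 : 0 < q) (hq1 : q < 1) (z : ℝ) (m : ℕ) :
    ∑ s ∈ Finset.range (m + 1), (-1 : ℝ) ^ s * qbinom q m s * q ^ (s.choose 2) * z ^ s
      = qp z q m := by
  induction m with
  | zero => simp [qp_zero, qbinom_self hq0 hq1]
  | succ m ih =>
    rw [qp_succ, ← ih]
    rw [Finset.sum_range_succ' (fun s => (-1 : ℝ) ^ s * qbinom q (m + 1) s * q ^ (s.choose 2) * z ^ s) (m + 1)]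
    rw [Finset.sum_range_succ (fun s => (-1 : ℝ) ^ (s + 1) * qbinom q (m + 1) (s + 1) * q ^ ((s + 1).choose 2) * z ^ (s + 1)) m]
    have hchoose : ∀ s : ℕ, (s + 1).choose 2 = s.choose 2 + s := by
      intro s
      rw [Nat.choose_succ_succ, Nat.choose_one_right, Nat.add_comm]
    have hRHS : (∑ s ∈ Finset.range (m + 1),
          (-1 : ℝ) ^ s * qbinom q m s * q ^ (s.choose 2) * z ^ s) * (1 - z * q ^ m)
        = (∑ s ∈ Finset.range (m + 1), (-1 : ℝ) ^ s * qbinom q m s * q ^ (s.choose 2) * z ^ s)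
          - (∑ s ∈ Finset.range (m + 1),
            (-1 : ℝ) ^ s * qbinom q m s * q ^ (s.choose 2) * z ^ s * (z * q ^ m)) := by
      rw [← Finset.sum_mul]
      ring
    rw [hRHS]
    rw [Finset.sum_range_succ' (fun s => (-1 : ℝ) ^ s * qbinom q m s * q ^ (s.choose 2) * z ^ s) m]
    rw [Finset.sum_range_succ (fun s => (-1 : ℝ) ^ s * qbinom q m s * q ^ (s.choose 2) * z ^ s * (z * q ^ m)) m]
    have hsum : ∀ x ∈ Finset.range m,
        (-1 : ℝ) ^ (x + 1) * qbinom q (m + 1) (x + 1) * q ^ ((x + 1).choose 2) * z ^ (x + 1)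
        = (-1 : ℝ) ^ (x + 1) * qbinom q m (x + 1) * q ^ ((x + 1).choose 2) * z ^ (x + 1)
          - (-1 : ℝ) ^ x * qbinom q m x * q ^ (x.choose 2) * z ^ x * (z * q ^ m) := by
      intro x hx
      have hxm : x < m := Finset.mem_range.mp hx
      have hq : q ^ x * q ^ (m - x) = q ^ m := by
        rw [← pow_add, Nat.add_sub_cancel' hxm.le]
      rw [pascal hq0 hq1 hxm, hchoose x, pow_add]
      linear_combination ((-1 : ℝ) ^ (x + 1) * qbinom q m x * q ^ (x.choose 2) * z ^ (x + 1)) * hq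
    rw [Finset.sum_congr rfl hsum, Finset.sum_sub_distrib]
    rw [qbinom_self hq0 hq1 (m + 1), qbinom_self hq0 hq1 m, qbinom_zero hq0 hq1 (m + 1),
      qbinom_zero hq0 hq1 m, hchoose m, pow_add]
    ring


lemma neg_one_pow_sub {s m : ℕ} (h : s ≤ m) : (-1 : ℝ) ^ (m - s) = (-1) ^ m * (-1) ^ s := by
  have h1 : (-1 : ℝ) ^ (m - s) * (-1) ^ s = (-1) ^ m := by
    rw [← pow_add, Nat.sub_add_cancel h]
  have h2 : (-1 : ℝ) ^ s * (-1) ^ s = 1 := by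
    rw [← pow_add]
    exact Even.neg_one_pow ⟨s, by ring⟩
  calc (-1 : ℝ) ^ (m - s) = (-1) ^ (m - s) * ((-1) ^ s * (-1) ^ s) := by rw [h2, mul_one]
  _ = (-1) ^ m * (-1) ^ s := by rw [← mul_assoc, h1]

lemma rpow_sum {q : ℝ} (hq0 : 0 < q) (f : ℕ → ℝ) (m : ℕ) :
    ∏ k ∈ Finset.range m, q ^ (f k) = q ^ (∑ k ∈ Finset.range m, f k) := by
  induction m with
  | zero => simp
  | succ m ih => rw [Finset.prod_range_succ, Finset.sum_range_succ, ih, ← Real.rpow_add hq0]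

lemma sum_range_cast (m : ℕ) : ∑ k ∈ Finset.range m, (k : ℝ) = m * (m - 1) / 2 := by
  induction m with
  | zero => simp
  | succ m ih =>
    rw [Finset.sum_range_succ, ih]
    push_cast
    ring

lemma qp_qneg {q : ℝ} (hq0 : 0 < q) (hq1 : q < 1) (m : ℕ) :
    qp (q ^ (-(m : ℝ))) q m = (-1 : ℝ) ^ m * q ^ (-((m : ℝ) * ((m : ℝ) + 1)) / 2) * qp q q m := by
  unfold qp
  have step1 : ∀ k ∈ Finset.range m,
      (1 - q ^ (-(m : ℝ)) * q ^ k) = (-1) * q ^ ((k : ℝ) - m) * (1 - q ^ ((m : ℝ) - k)) := by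
    intro k hk
    have e1 : q ^ (-(m : ℝ)) * q ^ k = q ^ ((k : ℝ) - m) := by
      rw [← Real.rpow_natCast q k, ← Real.rpow_add hq0]
      ring_nf
    have e2 : q ^ ((k : ℝ) - m) * q ^ ((m : ℝ) - k) = 1 := by
      rw [← Real.rpow_add hq0]
      norm_num
    rw [e1]
    nlinarith [e2]
  rw [Finset.prod_congr rfl step1]
  rw [Finset.prod_mul_distrib, Finset.prod_mul_distrib, Finset.prod_const]
  have e3 : ∏ k ∈ Finset.range m, q ^ ((k : ℝ) - m) = q ^ (-((m : ℝ) * ((m : ℝ) + 1)) / 2) := by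
    rw [rpow_sum hq0]
    congr 1
    rw [Finset.sum_sub_distrib, sum_range_cast, Finset.sum_const]
    simp
    ring
  have e4 : ∏ k ∈ Finset.range m, (1 - q ^ ((m : ℝ) - k)) = qp q q m := by
    have hc : ∀ k ∈ Finset.range m, (1 - q ^ ((m : ℝ) - k)) = 1 - q ^ (m - k : ℕ) := by
      intro k hk
      have hk' : k ≤ m := (Finset.mem_range.mp hk).le
      rw [← Real.rpow_natCast q (m - k), Nat.cast_sub hk']
    rw [Finset.prod_congr rfl hc]
    unfold qp
    calc ∏ x ∈ Finset.range m, (1 - q ^ (m - x))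
        = ∏ x ∈ Finset.range m, (1 - q ^ (m - 1 - x + 1)) := by
          apply Finset.prod_congr rfl
          intro x hx
          have hxm : x < m := Finset.mem_range.mp hx
          have h2 : m - x = m - 1 - x + 1 := by omega
          rw [h2]
      _ = ∏ j ∈ Finset.range m, (1 - q ^ (j + 1)) :=
          Finset.prod_range_reflect (fun j => 1 - q ^ (j + 1)) m
      _ = ∏ k ∈ Finset.range m, (1 - q * q ^ k) := by
          apply Finset.prod_congr rfl
          intro j _
          rw [pow_succ']
  rw [e3, e4, Finset.card_range]
  unfold qp
  ring

lemma key {p q : ℝ} (hp0 : 0 ≤ p) (hp1 : p < 1) (hq0 : 0 < q) (hq1 : q < 1)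
    {i m : ℕ} (him : i ≤ m) :
    ∑ s ∈ Finset.range (m + 1), sw p q (i + s) *
      ((-1 : ℝ) ^ (m - s) / (qp q q m * qp p q s) * qbinom q m s *
        q ^ ((((m : ℝ) + 1) * (2 * (m : ℝ) + 1)) / 2) *
        q ^ ((s : ℝ) ^ 2 + (s : ℝ) / 2))
      = if i = m then 1 else 0 := by
  have hpne : ∀ k, qp p q k ≠ 0 := fun k => (qp_pos hq0 hq1 hp0 hp1 k).ne'
  have hqne := qpq_ne hq0 hq1
  have hterm : ∀ s ∈ Finset.range (m + 1),
      sw p q (i + s) * ((-1 : ℝ) ^ (m - s) / (qp q q m * qp p q s) * qbinom q m s *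
        q ^ ((((m : ℝ) + 1) * (2 * (m : ℝ) + 1)) / 2) * q ^ ((s : ℝ) ^ 2 + (s : ℝ) / 2))
      = ∑ t ∈ Finset.range (i + 1),
          ((-1 : ℝ) ^ s * qbinom q m s * q ^ (s.choose 2)
              * (q ^ ((t : ℝ) - (i : ℝ))) ^ s) *
          ((-1 : ℝ) ^ m * ((-1 : ℝ) ^ t * qbinom q i t * q ^ (t.choose 2) * p ^ t) *
            q ^ ((m : ℝ) ^ 2 + 3 * (m : ℝ) / 2 - (i : ℝ) - (i : ℝ) ^ 2 / 2) / qp q q m) := by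
    intro s hs
    have hsm : s ≤ m := by
      have := Finset.mem_range.mp hs; omega
    have h1 : qp p q (i + s) = qp p q s * qp (p * q ^ s) q i := by
      rw [show i + s = s + i from Nat.add_comm i s, qp_add]
      congr 1
      unfold qp
      apply Finset.prod_congr rfl
      intro k _
      rw [pow_add]
      ring
    have hsw : sw p q (i + s) = qp (p * q ^ s) q i *
        (qp p q s * q ^ (-(((i : ℝ) + (s : ℝ) + 1) ^ 2) / 2)) := by
      unfold sw
      rw [h1, show -(((i + s : ℕ) : ℝ) + 1) ^ 2 / 2 = -(((i : ℝ) + (s : ℝ) + 1) ^ 2) / 2 from by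
        push_cast; ring]
      ring
    rw [hsw, ← qbt hq0 hq1 (p * q ^ s) i, Finset.sum_mul, Finset.sum_mul]
    apply Finset.sum_congr rfl
    intro t ht
    rw [neg_one_pow_sub hsm, mul_pow, ← pow_mul]
    have hcomb : q ^ (t * s) * q ^ (-(((i : ℝ) + (s : ℝ) + 1) ^ 2) / 2)
          * q ^ ((((m : ℝ) + 1) * (2 * (m : ℝ) + 1)) / 2) * q ^ ((s : ℝ) ^ 2 + (s : ℝ) / 2)
        = q ^ (s.choose 2) * (q ^ ((t : ℝ) - (i : ℝ))) ^ s
          * q ^ ((m : ℝ) ^ 2 + 3 * (m : ℝ) / 2 - (i : ℝ) - (i : ℝ) ^ 2 / 2) := by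
      rw [← Real.rpow_natCast q (t * s), ← Real.rpow_natCast q (s.choose 2),
        ← Real.rpow_natCast (q ^ ((t : ℝ) - (i : ℝ))) s, ← Real.rpow_mul hq0.le,
        ← Real.rpow_add hq0, ← Real.rpow_add hq0, ← Real.rpow_add hq0,
        ← Real.rpow_add hq0, ← Real.rpow_add hq0]
      congr 1
      rw [choose_two_cast]
      push_cast
      ring
    trans (((-1 : ℝ) ^ m * (-1 : ℝ) ^ s * (-1 : ℝ) ^ t * qbinom q i t * q ^ (t.choose 2)
        * p ^ t * qbinom q m s / qp q q m) *
        (q ^ (t * s) * q ^ (-(((i : ℝ) + (s : ℝ) + 1) ^ 2) / 2)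
          * q ^ ((((m : ℝ) + 1) * (2 * (m : ℝ) + 1)) / 2) * q ^ ((s : ℝ) ^ 2 + (s : ℝ) / 2)))
    · have hA := hqne m
      have hB := hpne s
      field_simp
      ring
    · rw [hcomb]
      ring
  rw [Finset.sum_congr rfl hterm, Finset.sum_comm]
  have hzero : ∀ a b : ℕ, a ≤ b → b - a < m → qp (q ^ ((a : ℝ) - (b : ℝ))) q m = 0 := by
    intro a b hab hbm
    unfold qp
    apply Finset.prod_eq_zero (Finset.mem_range.mpr hbm)
    rw [← Real.rpow_natCast q (b - a), ← Real.rpow_add hq0, Nat.cast_sub hab,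
      show (a : ℝ) - b + ((b : ℝ) - a) = 0 from by ring, Real.rpow_zero]
    ring
  have hinner : ∀ t ∈ Finset.range (i + 1),
      (∑ s ∈ Finset.range (m + 1),
        ((-1 : ℝ) ^ s * qbinom q m s * q ^ (s.choose 2) * (q ^ ((t : ℝ) - (i : ℝ))) ^ s) *
          ((-1 : ℝ) ^ m * ((-1 : ℝ) ^ t * qbinom q i t * q ^ (t.choose 2) * p ^ t) *
            q ^ ((m : ℝ) ^ 2 + 3 * (m : ℝ) / 2 - (i : ℝ) - (i : ℝ) ^ 2 / 2) / qp q q m))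
      = qp (q ^ ((t : ℝ) - (i : ℝ))) q m *
          ((-1 : ℝ) ^ m * ((-1 : ℝ) ^ t * qbinom q i t * q ^ (t.choose 2) * p ^ t) *
            q ^ ((m : ℝ) ^ 2 + 3 * (m : ℝ) / 2 - (i : ℝ) - (i : ℝ) ^ 2 / 2) / qp q q m) := by
    intro t _
    rw [← Finset.sum_mul, qbt hq0 hq1]
  rw [Finset.sum_congr rfl hinner]
  by_cases hi : i = m
  · subst hi
    rw [if_pos rfl]
    rw [Finset.sum_range_succ']
    have hz : ∀ t ∈ Finset.range i,
        qp (q ^ (((t + 1 : ℕ) : ℝ) - (i : ℝ))) q i *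
          ((-1 : ℝ) ^ i * ((-1 : ℝ) ^ (t + 1) * qbinom q i (t + 1) * q ^ ((t + 1).choose 2) * p ^ (t + 1)) *
            q ^ ((i : ℝ) ^ 2 + 3 * (i : ℝ) / 2 - (i : ℝ) - (i : ℝ) ^ 2 / 2) / qp q q i) = 0 := by
      intro t ht
      have htm : t < i := Finset.mem_range.mp ht
      rw [hzero (t + 1) i (by omega) (by omega)]
      ring
    rw [Finset.sum_eq_zero hz, zero_add]
    rw [show (((0 : ℕ) : ℝ)) - (i : ℝ) = -(i : ℝ) from by push_cast; ring]
    rw [qp_qneg hq0 hq1, qbinom_zero hq0 hq1]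
    have e5 : q ^ (-((i : ℝ) * ((i : ℝ) + 1)) / 2) *
        q ^ ((i : ℝ) ^ 2 + 3 * (i : ℝ) / 2 - (i : ℝ) - (i : ℝ) ^ 2 / 2) = 1 := by
      rw [← Real.rpow_add hq0,
        show -((i : ℝ) * ((i : ℝ) + 1)) / 2 + ((i : ℝ) ^ 2 + 3 * (i : ℝ) / 2 - (i : ℝ) - (i : ℝ) ^ 2 / 2) = 0
          from by ring, Real.rpow_zero]
    have e6 : (-1 : ℝ) ^ i * (-1 : ℝ) ^ i = 1 := by
      rw [← pow_add]
      exact Even.neg_one_pow ⟨i, by ring⟩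
    calc ((-1 : ℝ) ^ i * q ^ (-((i : ℝ) * ((i : ℝ) + 1)) / 2) * qp q q i) *
          ((-1 : ℝ) ^ i * ((-1 : ℝ) ^ 0 * 1 * q ^ (Nat.choose 0 2) * p ^ 0) *
            q ^ ((i : ℝ) ^ 2 + 3 * (i : ℝ) / 2 - (i : ℝ) - (i : ℝ) ^ 2 / 2) / qp q q i)
        = ((-1 : ℝ) ^ i * (-1 : ℝ) ^ i) *
            (q ^ (-((i : ℝ) * ((i : ℝ) + 1)) / 2) *
              q ^ ((i : ℝ) ^ 2 + 3 * (i : ℝ) / 2 - (i : ℝ) - (i : ℝ) ^ 2 / 2)) *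
            (qp q q i * (qp q q i)⁻¹) := by
          rw [show Nat.choose 0 2 = 0 from rfl, pow_zero]
          ring
      _ = 1 := by rw [e5, e6, mul_inv_cancel₀ (hqne i)]; norm_num
  · have him' : i < m := lt_of_le_of_ne him hi
    rw [if_neg hi]
    apply Finset.sum_eq_zero
    intro t ht
    have htm : t ≤ i := by
      have := Finset.mem_range.mp ht; omega
    rw [hzero t i htm (by omega)]
    ring

lemma detH_ne {p q : ℝ} (hp0 : 0 ≤ p) (hp1 : p < 1) (hq0 : 0 < q) (hq1 : q < 1) (n : ℕ) :
    (Matrix.of fun i j : Fin (n + 1) => sw p q ((i : ℕ) + (j : ℕ))).det ≠ 0 := by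
  set H : Matrix (Fin (n + 1)) (Fin (n + 1)) ℝ :=
    Matrix.of fun i j : Fin (n + 1) => sw p q ((i : ℕ) + (j : ℕ)) with hH
  set W : Matrix (Fin (n + 1)) (Fin (n + 1)) ℝ :=
    Matrix.of (fun s m : Fin (n + 1) =>
      if (s : ℕ) ≤ (m : ℕ) then
        (-1 : ℝ) ^ ((m : ℕ) - (s : ℕ)) / (qp q q (m : ℕ) * qp p q (s : ℕ)) * qbinom q (m : ℕ) (s : ℕ) *
          q ^ (((((m : ℕ) : ℝ)) + 1) * (2 * (((m : ℕ) : ℝ)) + 1) / 2) *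
          q ^ ((((s : ℕ) : ℝ)) ^ 2 + (((s : ℕ) : ℝ)) / 2)
      else 0) with hW
  have hHW : ∀ i m : Fin (n + 1), (i : ℕ) ≤ (m : ℕ) →
      (H * W) i m = if (i : ℕ) = (m : ℕ) then 1 else 0 := by
    intro i m him
    rw [Matrix.mul_apply]
    set g : ℕ → ℝ := fun k => sw p q ((i : ℕ) + k) *
        (if k ≤ (m : ℕ) then
          (-1 : ℝ) ^ ((m : ℕ) - k) / (qp q q (m : ℕ) * qp p q k) * qbinom q (m : ℕ) k *
            q ^ (((((m : ℕ) : ℝ)) + 1) * (2 * (((m : ℕ) : ℝ)) + 1) / 2) *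
            q ^ (((k : ℝ)) ^ 2 + ((k : ℝ)) / 2)
        else 0) with hg
    have h1 : ∀ s : Fin (n + 1), H i s * W s m = g (s : ℕ) := fun s => rfl
    calc ∑ s : Fin (n + 1), H i s * W s m
        = ∑ k ∈ Finset.range (n + 1), g k := by
          rw [← Fin.sum_univ_eq_sum_range g (n + 1)]
          exact Finset.sum_congr rfl (fun s _ => h1 s)
      _ = ∑ k ∈ Finset.range ((m : ℕ) + 1), g k := by
          rw [← Finset.sum_subset (Finset.range_subset_range.mpr (by omega : (m : ℕ) + 1 ≤ n + 1))
            (fun k _ hk => by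
              have hkm : ¬ (k ≤ (m : ℕ)) := by
                simp only [Finset.mem_range] at hk ⊢
                omega
              rw [hg]
              simp only [if_neg hkm]
              ring)]
      _ = if (i : ℕ) = (m : ℕ) then 1 else 0 := by
          have h3 : ∀ k ∈ Finset.range ((m : ℕ) + 1), g k
              = sw p q ((i : ℕ) + k) *
                ((-1 : ℝ) ^ ((m : ℕ) - k) / (qp q q (m : ℕ) * qp p q k) * qbinom q (m : ℕ) k *
                  q ^ (((((m : ℕ) : ℝ)) + 1) * (2 * (((m : ℕ) : ℝ)) + 1) / 2) *
                  q ^ (((k : ℝ)) ^ 2 + ((k : ℝ)) / 2)) := by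
            intro k hk
            have hkm : k ≤ (m : ℕ) := by have := Finset.mem_range.mp hk; omega
            simp only [hg, if_pos hkm]
          rw [Finset.sum_congr rfl h3]
          exact key hp0 hp1 hq0 hq1 him
  have htri : (H * W).BlockTriangular OrderDual.toDual := by
    intro i m hlt
    have hlt' : (i : ℕ) < (m : ℕ) := hlt
    rw [hHW i m hlt'.le, if_neg (by omega)]
  have hdet1 : (H * W).det = 1 := by
    rw [Matrix.det_of_lowerTriangular _ htri]
    rw [Finset.prod_congr rfl (fun i _ => hHW i i le_rfl)]
    simp
  intro h
  rw [Matrix.det_mul, h, zero_mul] at hdet1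
  exact zero_ne_one hdet1


theorem stmt_6 (p q : ℝ) (hp0 : 0 ≤ p) (hp1 : p < 1) (hq0 : 0 < q) (hq1 : q < 1)
    (n s : ℕ) (hn : 1 ≤ n) (hs : s ≤ n) :
    (-1 : ℝ) ^ (n + s) *
      ((Matrix.of fun i j : Fin (n + 1) => sw p q ((i : ℕ) + (j : ℕ))).submatrix
        (Fin.succAbove (Fin.last n))
        (Fin.succAbove ⟨s, Nat.lt_succ_of_le hs⟩)).det
      = (-1 : ℝ) ^ (n - s) / (qp q q n * qp p q s) * qbinom q n s * hD p q n *
          q ^ ((((n : ℝ) + 1) * (2 * (n : ℝ) + 1)) / 2) *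
          q ^ ((s : ℝ) ^ 2 + (s : ℝ) / 2) := by
  set H : Matrix (Fin (n + 1)) (Fin (n + 1)) ℝ :=
    Matrix.of fun i j : Fin (n + 1) => sw p q ((i : ℕ) + (j : ℕ)) with hH
  set u : Fin (n + 1) → ℝ := fun j =>
    (-1 : ℝ) ^ (n + (j : ℕ)) * (H.submatrix (Fin.last n).succAbove j.succAbove).det with hu
  set v : Fin (n + 1) → ℝ := fun j =>
    (-1 : ℝ) ^ (n - (j : ℕ)) / (qp q q n * qp p q (j : ℕ)) * qbinom q n (j : ℕ) * hD p q n *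
      q ^ ((((n : ℝ) + 1) * (2 * (n : ℝ) + 1)) / 2) *
      q ^ ((((j : ℕ) : ℝ)) ^ 2 + (((j : ℕ) : ℝ)) / 2) with hv
  have hmvu : H.mulVec u = fun i => if i = Fin.last n then H.det else 0 := by
    funext i
    rw [Matrix.mulVec]
    by_cases hi : i = Fin.last n
    · subst hi
      rw [if_pos rfl]
      rw [Matrix.det_succ_row H (Fin.last n)]
      apply Finset.sum_congr rfl
      intro j _
      simp only [hu, Fin.val_last, dotProduct]
      ring
    · rw [if_neg hi]
      have hdz : (H.updateRow (Fin.last n) (H i)).det = 0 :=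
        Matrix.det_zero_of_row_eq hi (by rw [Matrix.updateRow_ne hi, Matrix.updateRow_self])
      rw [Matrix.det_succ_row _ (Fin.last n)] at hdz
      rw [← hdz]
      apply Finset.sum_congr rfl
      intro j _
      rw [Matrix.updateRow_self, Matrix.submatrix_updateRow_succAbove]
      simp only [hu, Fin.val_last, dotProduct]
      ring
  have hmvv : H.mulVec v = fun i => if i = Fin.last n then H.det else 0 := by
    funext i
    rw [Matrix.mulVec]
    set g : ℕ → ℝ := fun k => sw p q ((i : ℕ) + k) *
        ((-1 : ℝ) ^ (n - k) / (qp q q n * qp p q k) * qbinom q n k *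
          q ^ ((((n : ℝ) + 1) * (2 * (n : ℝ) + 1)) / 2) *
          q ^ (((k : ℝ)) ^ 2 + ((k : ℝ)) / 2) * hD p q n) with hg
    have h1 : ∀ j : Fin (n + 1), H i j * v j = g (j : ℕ) := by
      intro j
      simp only [hg, hv, hH, Matrix.of_apply]
      ring
    have h2 : ∑ k ∈ Finset.range (n + 1), g k = (if (i : ℕ) = n then 1 else 0) * hD p q n := by
      have h4 : ∀ k ∈ Finset.range (n + 1), g k
          = (sw p q ((i : ℕ) + k) *
              ((-1 : ℝ) ^ (n - k) / (qp q q n * qp p q k) * qbinom q n k *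
                q ^ ((((n : ℝ) + 1) * (2 * (n : ℝ) + 1)) / 2) *
                q ^ (((k : ℝ)) ^ 2 + ((k : ℝ)) / 2))) * hD p q n := by
        intro k _
        simp only [hg]
        ring
      rw [Finset.sum_congr rfl h4, ← Finset.sum_mul,
        key hp0 hp1 hq0 hq1 (by omega : (i : ℕ) ≤ n)]
    calc dotProduct (H i) v = ∑ j : Fin (n + 1), H i j * v j := rfl
      _ = ∑ k ∈ Finset.range (n + 1), g k := by
          rw [← Fin.sum_univ_eq_sum_range g (n + 1)]
          exact Finset.sum_congr rfl (fun j _ => h1 j)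
      _ = (if (i : ℕ) = n then 1 else 0) * hD p q n := h2
      _ = if i = Fin.last n then H.det else 0 := by
          by_cases hi : i = Fin.last n
          · rw [if_pos hi, if_pos (by rw [hi, Fin.val_last]), one_mul]
            rfl
          · have hne : ¬ ((i : ℕ) = n) := by
              intro hcon
              exact hi (Fin.ext (by rw [hcon, Fin.val_last]))
            rw [if_neg hi, if_neg hne, zero_mul]
  have hdet : H.det ≠ 0 := detH_ne hp0 hp1 hq0 hq1 n
  have hinj : Function.Injective H.mulVec :=
    Matrix.mulVec_injective_iff_isUnit.mpr (Matrix.isUnit_iff_isUnit_det H |>.mpr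
      (isUnit_iff_ne_zero.mpr hdet))
  have huv : u = v := hinj (hmvu.trans hmvv.symm)
  have := congrFun huv ⟨s, Nat.lt_succ_of_le hs⟩
  simpa [hu, hv] using this
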